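/- Let f : ℕ ∪ {0} → ℝ⁺ be defined recursively by f(0) = 0, f(1) = 1, f(2) = 2, and for n ∈ ℕ and α ∈ [1, 2^n], f(2^n + α) = f(2^n) if n is odd and f(2^n + α) = f(2^n) + f(α) if n is even. Then f is subadditive on the natural numbers: f(w + z) ≤ f(w) + f(z) for all w, z ∈ ℕ. -/

import Mathlib

theorem subadditive_of_recursive_modulus (f : ℕ → ℝ)
    (hpos : ∀ n : ℕ, 0 ≤ f n)
    (h0 : f 0 = 0) (h1 : f 1 = 1) (h2 : f 2 = 2)
    (hrec : ∀ n : ℕ, 1 ≤ n → ∀ α : ℕ, 1 ≤ α → α ≤ 2 ^ n →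
      f (2 ^ n + α) = if Odd n then f (2 ^ n) else f (2 ^ n) + f α) :
    ∀ w z : ℕ, f (w + z) ≤ f w + f z := by
  have f3 : f 3 = 2 := by
    have h := hrec 1 le_rfl 1 le_rfl (by norm_num)
    rw [if_pos (by decide : Odd 1)] at h
    norm_num at h
    rw [h, h2]
  have f4 : f 4 = 2 := by
    have h := hrec 1 le_rfl 2 (by norm_num) (by norm_num)
    rw [if_pos (by decide : Odd 1)] at h
    norm_num at h
    rw [h, h2]
  -- Step: f is nondecreasing
  have hstep : ∀ m : ℕ, f m ≤ f (m + 1) := by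
    intro m
    induction m using Nat.strong_induction_on with
    | _ m ih =>
    match m, ih with
    | 0, _ => rw [h0, h1]; norm_num
    | 1, _ => rw [h1, h2]; norm_num
    | 2, _ => rw [h2, f3]
    | (m+3), ih =>
      have hM : (3:ℕ) ≤ m + 3 := by omega
      have hp1 : 2 ^ Nat.log 2 (m + 2) ≤ m + 2 := Nat.pow_log_le_self 2 (by omega)
      have hp2 : m + 2 < 2 ^ (Nat.log 2 (m + 2) + 1) :=
        Nat.lt_pow_succ_log_self (by norm_num) _
      set n := Nat.log 2 (m + 2) with hn
      have hn1 : 1 ≤ n :=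
        (Nat.le_log_iff_pow_le (by norm_num) (by omega)).mpr (show (2:ℕ)^1 ≤ m + 2 by omega)
      have hpow : 2 ^ (n + 1) = 2 ^ n + 2 ^ n := by rw [pow_succ]; ring
      have hα1 : 1 ≤ m + 3 - 2 ^ n := by omega
      have hα2 : m + 3 - 2 ^ n ≤ 2 ^ n := by omega
      rcases lt_or_eq_of_le hα2 with hlt | heq
      · have e1 : f (m + 3) = if Odd n then f (2^n) else f (2^n) + f (m + 3 - 2^n) := by
          rw [show m + 3 = 2^n + (m + 3 - 2^n) by omega]
          rw [show 2^n + (m + 3 - 2^n) - 2^n = m + 3 - 2^n by omega]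
          exact hrec n hn1 _ hα1 hα2
        have e2 : f (m + 4) = if Odd n then f (2^n) else f (2^n) + f (m + 4 - 2^n) := by
          rw [show m + 4 = 2^n + (m + 4 - 2^n) by omega]
          rw [show 2^n + (m + 4 - 2^n) - 2^n = m + 4 - 2^n by omega]
          exact hrec n hn1 _ (by omega) (by omega)
        have e3 : m + 4 - 2^n = (m + 3 - 2^n) + 1 := by omega
        rw [show m + 3 + 1 = m + 4 by omega, e1, e2, e3]
        by_cases hodd : Odd n
        · rw [if_pos hodd, if_pos hodd]
        · rw [if_neg hodd, if_neg hodd]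
          have := ih (m + 3 - 2^n) (by omega)
          linarith
      · -- m + 3 = 2^(n+1)
        have hM2 : m + 3 = 2 ^ (n+1) := by omega
        have e2 : f (m + 3 + 1) = if Odd (n+1) then f (2^(n+1)) else f (2^(n+1)) + f 1 := by
          rw [show m + 3 + 1 = 2^(n+1) + 1 by omega]
          exact hrec (n+1) (by omega) 1 le_rfl Nat.one_le_two_pow
        by_cases hodd : Odd (n+1)
        · rw [e2, if_pos hodd, ← hM2]
        · rw [e2, if_neg hodd, ← hM2, h1]; linarith
  have mono : Monotone f := monotone_nat_of_le_succ hstep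
  -- Main subadditivity by strong induction on w + z
  have main : ∀ m : ℕ, ∀ w z : ℕ, w + z = m → f (w + z) ≤ f w + f z := by
    intro m
    induction m using Nat.strong_induction_on with
    | _ m ih =>
    have key : ∀ w z : ℕ, w ≤ z → w + z = m → f (w + z) ≤ f w + f z := by
      intro w z hle hm
      rcases Nat.eq_zero_or_pos w with hw0 | hw1
      · subst hw0; rw [Nat.zero_add, h0]; linarith [hpos z]
      rcases le_or_gt (w + z) 4 with hsmall | hbig
      · have hw2 : w ≤ 2 := by omega
        have hz3 : z ≤ 3 := by omega
        interval_cases w <;> interval_cases z <;> first | (exfalso; omega) | norm_num [h1, h2, f3, f4]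
      · -- w + z = m ≥ 5
        have hm5 : 5 ≤ m := by omega
        have hp1 : 2 ^ Nat.log 2 (m - 1) ≤ m - 1 := Nat.pow_log_le_self 2 (by omega)
        have hp2 : m - 1 < 2 ^ (Nat.log 2 (m - 1) + 1) :=
          Nat.lt_pow_succ_log_self (by norm_num) _
        set n := Nat.log 2 (m - 1) with hn
        have hn2 : 2 ≤ n :=
          (Nat.le_log_iff_pow_le (by norm_num) (by omega)).mpr (show (2:ℕ)^2 ≤ m - 1 by omega)
        obtain ⟨k, hk⟩ : ∃ k, n = k + 1 := ⟨n - 1, by omega⟩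
        have hk1 : 1 ≤ k := by omega
        have hpow : 2 ^ n = 2 ^ k + 2 ^ k := by rw [hk, pow_succ]; ring
        have hpow2 : 2 ^ (n + 1) = 2 ^ n + 2 ^ n := by rw [pow_succ]; ring
        have h2k : 1 ≤ 2 ^ k := Nat.one_le_two_pow
        obtain ⟨α, hαeq, hα1, hα2⟩ : ∃ α, m = 2^n + α ∧ 1 ≤ α ∧ α ≤ 2^n :=
          ⟨m - 2^n, by omega, by omega, by omega⟩
        have eM : f m = if Odd n then f (2^n) else f (2^n) + f α := by
          rw [hαeq]; exact hrec n (by omega) α hα1 hα2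
        have hzlb : 2 ^ k + 1 ≤ z := by omega
        rw [hm]
        rcases Nat.even_or_odd n with hev | hodd
        · -- n even
          have hnodd : ¬ Odd n := by
            rw [Nat.odd_iff]; rw [Nat.even_iff] at hev; omega
          have hkodd : Odd k := by
            rw [Nat.odd_iff]; rw [Nat.even_iff] at hev; omega
          rcases le_or_gt (2^n) z with hz2n | hz2n
          · -- z ≥ 2^n
            obtain ⟨γ, hγeq⟩ : ∃ γ, z = 2^n + γ := ⟨z - 2^n, by omega⟩
            have hwγ : w + γ = α := by omega
            rcases Nat.eq_zero_or_pos γ with hγ0 | hγ1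
            · rw [eM, if_neg hnodd]
              have hwα : w = α := by omega
              have hz : z = 2^n := by omega
              rw [hwα, hz]; linarith
            · have hγ2 : γ ≤ 2^n := by omega
              have ez : f z = f (2^n) + f γ := by
                rw [hγeq, hrec n (by omega) γ hγ1 hγ2, if_neg hnodd]
              have hIH : f (w + γ) ≤ f w + f γ := ih (w + γ) (by omega) w γ rfl
              rw [hwγ] at hIH
              rw [eM, if_neg hnodd, ez]
              linarith
          · -- z < 2^n
            obtain ⟨δ, hδeq, hδ1, hδ2⟩ : ∃ δ, z = 2^k + δ ∧ 1 ≤ δ ∧ δ ≤ 2^k :=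
              ⟨z - 2^k, by omega, by omega, by omega⟩
            have ez : f z = f (2^k) := by
              rw [hδeq, hrec k hk1 δ hδ1 hδ2, if_pos hkodd]
            have e2n : f (2^n) = f (2^k) := by
              rw [hpow, hrec k hk1 (2^k) h2k le_rfl, if_pos hkodd]
            have hαw : α ≤ w := by omega
            have hfaw : f α ≤ f w := mono hαw
            rw [eM, if_neg hnodd, e2n, ← ez]
            linarith
        · -- n odd
          have hodd' : Odd n := hodd
          have hkev : ¬ Odd k := by
            rw [Nat.odd_iff] at hodd ⊢; omega
          rcases le_or_gt z (2^n) with hz2n | hz2n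
          · -- z ≤ 2^n
            obtain ⟨β, hβeq, hβ1, hβ2⟩ : ∃ β, z = 2^k + β ∧ 1 ≤ β ∧ β ≤ 2^k :=
              ⟨z - 2^k, by omega, by omega, by omega⟩
            have ez : f z = f (2^k) + f β := by
              rw [hβeq, hrec k hk1 β hβ1 hβ2, if_neg hkev]
            have e2n : f (2^n) = f (2^k) + f (2^k) := by
              rw [hpow, hrec k hk1 (2^k) h2k le_rfl, if_neg hkev]
            have hmono2 : f (2^k) ≤ f (w + β) := mono (by omega)
            have hIH : f (w + β) ≤ f w + f β := ih (w + β) (by omega) w β rfl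
            rw [eM, if_pos hodd', e2n, ez]
            linarith
          · -- z > 2^n
            have hfz : f m ≤ f z := by
              rw [eM, if_pos hodd']; exact mono (by omega)
            linarith [hpos w]
    intro w z hm
    rcases le_total w z with h | h
    · exact key w z h hm
    · have hkey := key z w h (by omega)
      rw [Nat.add_comm z w] at hkey
      linarith
  intro w z
  exact main (w + z) w z rfl
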